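/- Let g₁, g₂ ∈ ℝⁿ, let d* = α* g₁ + (1−α*) g₂ where α* minimizes ‖α g₁ + (1−α) g₂‖² over [0,1], and suppose d* ≠ 0. Then min(⟨d*, g₁⟩, ⟨d*, g₂⟩) ≥ ‖d*‖², so the direction d*/‖d*‖ has nonnegative inner product with both g₁ and g₂. -/

import Mathlib

lemma mgda_aux {n : ℕ} (g₁ g₂ : EuclideanSpace ℝ (Fin n)) (α t : ℝ)
    (ht : (α + t) ∈ Set.Icc (0:ℝ) 1)
    (hmin : ∀ β ∈ Set.Icc (0 : ℝ) 1,
      ‖α • g₁ + (1 - α) • g₂‖ ^ 2 ≤ ‖β • g₁ + (1 - β) • g₂‖ ^ 2) :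
    0 ≤ 2 * t * (inner ℝ (α • g₁ + (1 - α) • g₂) (g₁ - g₂) : ℝ) + t^2 * ‖g₁ - g₂‖^2 := by
  have h := hmin (α + t) ht
  have hexp : (α + t) • g₁ + (1 - (α + t)) • g₂
      = (α • g₁ + (1 - α) • g₂) + t • (g₁ - g₂) := by
    module
  rw [hexp] at h
  have hr : ‖(α • g₁ + (1 - α) • g₂) + t • (g₁ - g₂)‖^2
      = ‖α • g₁ + (1 - α) • g₂‖^2
        + 2 * (t * (inner ℝ (α • g₁ + (1 - α) • g₂) (g₁ - g₂) : ℝ)) + t^2 * ‖g₁ - g₂‖^2 := by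
    rw [norm_add_sq_real, real_inner_smul_right, norm_smul, mul_pow, Real.norm_eq_abs, sq_abs]
  rw [hr] at h
  linarith

theorem stmt_5 {n : ℕ} (g₁ g₂ : EuclideanSpace ℝ (Fin n)) (α : ℝ)
    (hα : α ∈ Set.Icc (0 : ℝ) 1)
    (hmin : ∀ β ∈ Set.Icc (0 : ℝ) 1,
      ‖α • g₁ + (1 - α) • g₂‖ ^ 2 ≤ ‖β • g₁ + (1 - β) • g₂‖ ^ 2)
    (hd : α • g₁ + (1 - α) • g₂ ≠ 0) :
    min (inner ℝ (α • g₁ + (1 - α) • g₂) g₁ : ℝ) (inner ℝ (α • g₁ + (1 - α) • g₂) g₂ : ℝ)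
      ≥ ‖α • g₁ + (1 - α) • g₂‖ ^ 2 ∧
    (inner ℝ (‖α • g₁ + (1 - α) • g₂‖⁻¹ • (α • g₁ + (1 - α) • g₂)) g₁ : ℝ) ≥ 0 ∧
    (inner ℝ (‖α • g₁ + (1 - α) • g₂‖⁻¹ • (α • g₁ + (1 - α) • g₂)) g₂ : ℝ) ≥ 0 := by
  set d := α • g₁ + (1 - α) • g₂ with hdef
  set c : ℝ := inner ℝ d (g₁ - g₂) with hc
  set A : ℝ := ‖g₁ - g₂‖^2 with hA
  obtain ⟨hα0, hα1⟩ := hα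
  have hAnn : 0 ≤ A := sq_nonneg _
  -- claim 1 : (1-α) * c ≥ 0
  have h1 : 0 ≤ (1 - α) * c := by
    by_contra hcon
    push_neg at hcon
    have hαne : α ≠ 1 := by rintro rfl; simp at hcon
    have hα1' : α < 1 := lt_of_le_of_ne hα1 hαne
    have hcneg : c < 0 := by
      by_contra hc0
      push_neg at hc0
      nlinarith [mul_nonneg (sub_nonneg.mpr hα1) hc0]
    have hApos : 0 < A := by
      rcases eq_or_lt_of_le hAnn with h | h
      · exfalso
        have : g₁ - g₂ = 0 := by
          have := pow_eq_zero_iff (n := 2) (by norm_num) |>.mp h.symm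
          simpa [norm_eq_zero] using this
        rw [hc, this, inner_zero_right] at hcneg
        exact lt_irrefl _ hcneg
      · exact h
    set t : ℝ := min (1 - α) (-c / A) with htdef
    have htpos : 0 < t := lt_min (by linarith) (div_pos (by linarith) hApos)
    have ht1 : t ≤ 1 - α := min_le_left _ _
    have ht2 : t ≤ -c / A := min_le_right _ _
    have ht2' : t * A ≤ -c := by
      rw [div_eq_mul_inv] at ht2
      calc t * A ≤ (-c * A⁻¹) * A := by nlinarith
        _ = -c := by field_simp
    have key := mgda_aux g₁ g₂ α t ⟨by linarith, by linarith⟩ hmin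
    rw [← hdef, ← hc, ← hA] at key
    nlinarith
  -- claim 2 : α * c ≤ 0
  have h2 : α * c ≤ 0 := by
    by_contra hcon
    push_neg at hcon
    have hαne : α ≠ 0 := by rintro rfl; simp at hcon
    have hα0' : 0 < α := lt_of_le_of_ne hα0 (Ne.symm hαne)
    have hcpos : 0 < c := by
      by_contra hc0
      push_neg at hc0
      nlinarith [mul_nonpos_of_nonneg_of_nonpos hα0 hc0]
    have hApos : 0 < A := by
      rcases eq_or_lt_of_le hAnn with h | h
      · exfalso
        have : g₁ - g₂ = 0 := by
          have := pow_eq_zero_iff (n := 2) (by norm_num) |>.mp h.symm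
          simpa [norm_eq_zero] using this
        rw [hc, this, inner_zero_right] at hcpos
        exact lt_irrefl _ hcpos
      · exact h
    set t : ℝ := min α (c / A) with htdef
    have htpos : 0 < t := lt_min hα0' (div_pos hcpos hApos)
    have ht1 : t ≤ α := min_le_left _ _
    have ht2 : t ≤ c / A := min_le_right _ _
    have ht2' : t * A ≤ c := by
      rw [div_eq_mul_inv] at ht2
      calc t * A ≤ (c * A⁻¹) * A := by nlinarith
        _ = c := by field_simp
    have key := mgda_aux g₁ g₂ α (-t) ⟨by linarith, by linarith⟩ hmin
    rw [← hdef, ← hc, ← hA] at key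
    nlinarith
  have hdd : (inner ℝ d d : ℝ) = α * (inner ℝ d g₁ : ℝ) + (1 - α) * (inner ℝ d g₂ : ℝ) := by
    conv_lhs => rw [hdef]
    rw [inner_add_right, real_inner_smul_right, real_inner_smul_right]
  have hcsplit : c = (inner ℝ d g₁ : ℝ) - (inner ℝ d g₂ : ℝ) := by
    rw [hc, inner_sub_right]
  have hnorm : ‖d‖^2 = (inner ℝ d d : ℝ) := (real_inner_self_eq_norm_sq d).symm
  have hg1 : (inner ℝ d g₁ : ℝ) ≥ ‖d‖^2 := by
    rw [hnorm, hdd]; nlinarith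
  have hg2 : (inner ℝ d g₂ : ℝ) ≥ ‖d‖^2 := by
    rw [hnorm, hdd]; nlinarith
  have hdn : (0:ℝ) < ‖d‖ := norm_pos_iff.mpr hd
  refine ⟨le_min hg1 hg2, ?_, ?_⟩ <;> rw [real_inner_smul_left]
  · exact mul_nonneg (inv_nonneg.mpr hdn.le) (le_trans (sq_nonneg _) hg1)
  · exact mul_nonneg (inv_nonneg.mpr hdn.le) (le_trans (sq_nonneg _) hg2)
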